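/- Let G be a graph, H an induced 5-cycle in G with vertices v1,...,v5, and suppose every vertex outside H has either exactly two consecutive neighbors or exactly three pairwise nonconsecutive neighbors on H, G is K4-free, and for each i the set U_i of outside vertices adjacent to v_{i+2} and v_{i+3} satisfies U_1 = U_5 = ∅. Then every maximal independent set of G disjoint from V(H) contains at most 2 vertices, assuming additionally that G is {W5, fork}-free. -/

import Mathlib

open SimpleGraph

/-- `v` enumerates the vertices of an induced cycle of length `n` in `G`:
`v` is injective and two listed vertices are adjacent iff they are consecutive. -/
def IsInducedCycle {V : Type*} (G : SimpleGraph V) (n : ℕ) (v : ZMod n → V) : Prop :=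
  3 ≤ n ∧ Function.Injective v ∧
    ∀ i j : ZMod n, G.Adj (v i) (v j) ↔ (j = i + 1 ∨ i = j + 1)

/-- An odd hole: an induced odd cycle of length at least 5. -/
def IsOddHole {V : Type*} (G : SimpleGraph V) (n : ℕ) (v : ZMod n → V) : Prop :=
  5 ≤ n ∧ Odd n ∧ IsInducedCycle G n v

/-- `G` contains an induced fork (chair): the tree on `{c,x,y,z,w}` with
edges `cx, cy, cz, zw`. -/
def HasInducedFork {V : Type*} (G : SimpleGraph V) : Prop :=
  ∃ c x y z w : V, ([c, x, y, z, w] : List V).Nodup ∧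
    G.Adj c x ∧ G.Adj c y ∧ G.Adj c z ∧ G.Adj z w ∧
    ¬G.Adj x y ∧ ¬G.Adj x z ∧ ¬G.Adj y z ∧ ¬G.Adj c w ∧ ¬G.Adj x w ∧ ¬G.Adj y w

/-- `G` contains an induced claw `K_{1,3}`. -/
def HasInducedClaw {V : Type*} (G : SimpleGraph V) : Prop :=
  ∃ c x y z : V, ([c, x, y, z] : List V).Nodup ∧
    G.Adj c x ∧ G.Adj c y ∧ G.Adj c z ∧ ¬G.Adj x y ∧ ¬G.Adj x z ∧ ¬G.Adj y z

/-- `G` contains an induced `W₅`: an induced 5-cycle plus a vertex adjacent to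
all five cycle vertices. -/
def HasInducedW5 {V : Type*} (G : SimpleGraph V) : Prop :=
  ∃ (u : ZMod 5 → V) (h : V), Function.Injective u ∧ (∀ i, h ≠ u i) ∧
    (∀ i j : ZMod 5, G.Adj (u i) (u j) ↔ (j = i + 1 ∨ i = j + 1)) ∧
    ∀ i, G.Adj h (u i)

/-- `S` is an independent set of `G`. -/
def IsIS {V : Type*} (G : SimpleGraph V) (S : Set V) : Prop :=
  ∀ ⦃a⦄, a ∈ S → ∀ ⦃b⦄, b ∈ S → ¬G.Adj a b

/-- `S` is a maximal independent set of `G`. -/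
def MaxIS {V : Type*} (G : SimpleGraph V) (S : Set V) : Prop :=
  IsIS G S ∧ ∀ T, IsIS G T → S ⊆ T → T = S

/-- A vertex `u` outside an (induced) 5-cycle `v` has either exactly two consecutive
neighbors on the cycle, or exactly three neighbors that are not three consecutive
vertices (the only such pattern on a 5-cycle being `{i, i+1, i+3}`). -/
def GoodAttach {V : Type*} (G : SimpleGraph V) (v : ZMod 5 → V) (u : V) : Prop :=
  (∃ i : ZMod 5, ∀ k, G.Adj u (v k) ↔ (k = i ∨ k = i + 1)) ∨
  (∃ i : ZMod 5, ∀ k, G.Adj u (v k) ↔ (k = i ∨ k = i + 1 ∨ k = i + 3))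

/-- `U_i`: the vertices outside the 5-cycle adjacent to both `v_{i+2}` and `v_{i+3}`. -/
def Uset {V : Type*} (G : SimpleGraph V) (v : ZMod 5 → V) (i : ZMod 5) : Set V :=
  {u | u ∉ Set.range v ∧ G.Adj u (v (i + 2)) ∧ G.Adj u (v (i + 3))}

/-- `U_i⁺ = U_i ∩ N(v_i)`. -/
def UsetP {V : Type*} (G : SimpleGraph V) (v : ZMod 5 → V) (i : ZMod 5) : Set V :=
  {u | u ∈ Uset G v i ∧ G.Adj u (v i)}

/-- `U_i⁻ = U_i \ N(v_i)`. -/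
def UsetM {V : Type*} (G : SimpleGraph V) (v : ZMod 5 → V) (i : ZMod 5) : Set V :=
  {u | u ∈ Uset G v i ∧ ¬G.Adj u (v i)}

def typN : Fin 6 → List (ZMod 5)
  | 0 => [0, 1]
  | 1 => [1, 2]
  | 2 => [4, 0]
  | 3 => [0, 1, 3]
  | 4 => [1, 2, 4]
  | 5 => [2, 4, 0]

theorem stmt15 {V : Type*} (G : SimpleGraph V) (hK4 : G.CliqueFree 4)
    (hW5 : ¬HasInducedW5 G) (hfork : ¬HasInducedFork G)
    (v : ZMod 5 → V) (hH : IsInducedCycle G 5 v)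
    (hstar : ∀ u : V, u ∉ Set.range v → GoodAttach G v u)
    (hU1 : Uset G v 1 = ∅) (hU5 : Uset G v 5 = ∅) :
    ∀ S : Set V, MaxIS G S → (∀ i, v i ∉ S) → S.ncard ≤ 2 := by
  obtain ⟨-, hinj, hvv⟩ := hH
  intro S hS hSv
  by_contra hcard
  push_neg at hcard
  have hSind : IsIS G S := hS.1
  have hns : ∀ u ∈ S, u ∉ Set.range v := by
    rintro u hu ⟨i, rfl⟩; exact hSv i hu
  -- every cycle vertex has a neighbor in S
  have hnbr : ∀ i : ZMod 5, ∃ u ∈ S, G.Adj u (v i) := by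
    intro i
    by_contra h
    push_neg at h
    have hIS : IsIS G (insert (v i) S) := by
      intro a ha b hb
      rcases ha with rfl | ha <;> rcases hb with rfl | hb
      · exact fun h' => G.loopless.irrefl _ h'
      · exact fun h' => h b hb h'.symm
      · exact fun h' => h a ha h'
      · exact hSind ha hb
    have h2 := hS.2 _ hIS (Set.subset_insert _ _)
    exact hSv i (h2 ▸ Set.mem_insert (v i) S)
  -- classify types of vertices in S
  have htype : ∀ u ∈ S, ∃ t : Fin 6, ∀ k, G.Adj u (v k) ↔ k ∈ typN t := by
    intro u hu
    have hcase : ∀ j : ZMod 5, j = 0 ∨ j = 1 ∨ j = 2 ∨ j = 3 ∨ j = 4 := by decide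
    have hmem : ∀ h2 : G.Adj u (v 2), ∀ h3 : G.Adj u (v 3), False := by
      intro h2 h3
      have hm : u ∈ Uset G v 5 := by
        refine ⟨hns u hu, ?_, ?_⟩
        · rw [show ((5:ZMod 5)+2) = 2 by decide]; exact h2
        · rw [show ((5:ZMod 5)+3) = 3 by decide]; exact h3
      rw [hU5] at hm; exact hm
    have hmem' : ∀ h3 : G.Adj u (v 3), ∀ h4 : G.Adj u (v 4), False := by
      intro h3 h4
      have hm : u ∈ Uset G v 1 := by
        refine ⟨hns u hu, ?_, ?_⟩
        · rw [show ((1:ZMod 5)+2) = 3 by decide]; exact h3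
        · rw [show ((1:ZMod 5)+3) = 4 by decide]; exact h4
      rw [hU1] at hm; exact hm
    rcases hstar u (hns u hu) with ⟨i, hi⟩ | ⟨i, hi⟩ <;>
      rcases hcase i with rfl | rfl | rfl | rfl | rfl
    · exact ⟨0, fun k => (hi k).trans
        ((by decide : ∀ k : ZMod 5, ((k = 0 ∨ k = 0 + 1) ↔ k ∈ typN 0)) k)⟩
    · exact ⟨1, fun k => (hi k).trans
        ((by decide : ∀ k : ZMod 5, ((k = 1 ∨ k = 1 + 1) ↔ k ∈ typN 1)) k)⟩
    · exact absurd (hmem ((hi 2).mpr (by decide)) ((hi 3).mpr (by decide))) not_false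
    · exact absurd (hmem' ((hi 3).mpr (by decide)) ((hi 4).mpr (by decide))) not_false
    · exact ⟨2, fun k => (hi k).trans
        ((by decide : ∀ k : ZMod 5, ((k = 4 ∨ k = 4 + 1) ↔ k ∈ typN 2)) k)⟩
    · exact ⟨3, fun k => (hi k).trans
        ((by decide : ∀ k : ZMod 5, ((k = 0 ∨ k = 0 + 1 ∨ k = 0 + 3) ↔ k ∈ typN 3)) k)⟩
    · exact ⟨4, fun k => (hi k).trans
        ((by decide : ∀ k : ZMod 5, ((k = 1 ∨ k = 1 + 1 ∨ k = 1 + 3) ↔ k ∈ typN 4)) k)⟩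
    · exact absurd (hmem ((hi 2).mpr (by decide)) ((hi 3).mpr (by decide))) not_false
    · exact absurd (hmem' ((hi 3).mpr (by decide)) ((hi 4).mpr (by decide))) not_false
    · exact ⟨5, fun k => (hi k).trans
        ((by decide : ∀ k : ZMod 5, ((k = 4 ∨ k = 4 + 1 ∨ k = 4 + 3) ↔ k ∈ typN 5)) k)⟩
  -- u : the neighbor of v 3
  obtain ⟨u, huS, hu3⟩ := hnbr 3
  obtain ⟨tu, htu⟩ := htype u huS
  have htu3 : tu = 3 :=
    (by decide : ∀ t : Fin 6, (3:ZMod 5) ∈ typN t → t = 3) tu ((htu 3).mp hu3)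
  subst htu3
  have hu := htu
  -- a : the neighbor of v 2
  obtain ⟨a, haS, ha2⟩ := hnbr 2
  obtain ⟨ta, hta⟩ := htype a haS
  have hta2 : ta = 1 ∨ ta = 4 ∨ ta = 5 :=
    (by decide : ∀ t : Fin 6, (2:ZMod 5) ∈ typN t → t = 1 ∨ t = 4 ∨ t = 5) ta ((hta 2).mp ha2)
  -- third vertex b
  have hb3 : ∃ b ∈ S, b ≠ u ∧ b ≠ a := by
    by_contra h
    push_neg at h
    have hsub : S ⊆ {u, a} := by
      intro x hx
      rcases eq_or_ne x u with rfl | hxu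
      · exact Set.mem_insert _ _
      · exact (h x hx hxu) ▸ Set.mem_insert_of_mem _ rfl
    have h1 := Set.ncard_le_ncard hsub ((Set.finite_singleton a).insert u)
    have h2 : ({u, a} : Set V).ncard ≤ 2 := by
      have := Set.ncard_insert_le u ({a} : Set V)
      simpa [Set.ncard_singleton] using this
    omega
  obtain ⟨b, hbS, hbu, hba⟩ := hb3
  obtain ⟨tb, htb⟩ := htype b hbS
  have hunv : ∀ k, u ≠ v k := fun k h => hns u huS ⟨k, h.symm⟩
  have hanv : ∀ k, a ≠ v k := fun k h => hns a haS ⟨k, h.symm⟩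
  have hbnv : ∀ k, b ≠ v k := fun k h => hns b hbS ⟨k, h.symm⟩
  have hnadj_ua : ¬G.Adj u a := hSind huS haS
  have hnadj_ub : ¬G.Adj u b := hSind huS hbS
  have hnadj_ab : ¬G.Adj a b := hSind haS hbS
  have hne_ub : u ≠ b := Ne.symm hbu
  have hne_ab : a ≠ b := Ne.symm hba
  have hcase6 : ∀ t : Fin 6, t = 0 ∨ t = 1 ∨ t = 2 ∨ t = 3 ∨ t = 4 ∨ t = 5 := by decide
  have hne_ua : u ≠ a := by
    rintro rfl
    rcases hta2 with rfl | rfl | rfl <;> exact absurd ((hta 3).mp hu3) (by decide)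
  rcases hta2 with rfl | rfl | rfl <;>
    rcases hcase6 tb with rfl | rfl | rfl | rfl | rfl | rfl
  · refine hfork ⟨(v 1), a, b, u, (v 3), ?_,
      (((hta 1).mpr (by decide)).symm), (((htb 1).mpr (by decide)).symm), (((htu 1).mpr (by decide)).symm), ((htu 3).mpr (by decide)),
      hnadj_ab, (fun hE => hnadj_ua hE.symm), (fun hE => hnadj_ub hE.symm), (fun hE => absurd ((hvv 1 3).mp hE) (by decide)), (fun hE => absurd ((hta 3).mp hE) (by decide)), (fun hE => absurd ((htb 3).mp hE) (by decide))⟩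
    simp only [List.nodup_cons, List.mem_cons, List.mem_singleton,
      List.not_mem_nil, or_false, not_or, List.nodup_nil, and_true]
    exact ⟨⟨(hanv 1).symm,(hbnv 1).symm,(hunv 1).symm,(hinj.ne (by decide : (1:ZMod 5) ≠ 3))⟩,⟨hne_ab,(Ne.symm hne_ua),(hanv 3)⟩,⟨(Ne.symm hne_ub),(hbnv 3)⟩,(hunv 3), not_false⟩
  · refine hfork ⟨(v 1), a, b, (v 0), (v 4), ?_,
      (((hta 1).mpr (by decide)).symm), (((htb 1).mpr (by decide)).symm), ((hvv 1 0).mpr (by decide)), ((hvv 0 4).mpr (by decide)),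
      hnadj_ab, (fun hE => absurd ((hta 0).mp hE) (by decide)), (fun hE => absurd ((htb 0).mp hE) (by decide)), (fun hE => absurd ((hvv 1 4).mp hE) (by decide)), (fun hE => absurd ((hta 4).mp hE) (by decide)), (fun hE => absurd ((htb 4).mp hE) (by decide))⟩
    simp only [List.nodup_cons, List.mem_cons, List.mem_singleton,
      List.not_mem_nil, or_false, not_or, List.nodup_nil, and_true]
    exact ⟨⟨(hanv 1).symm,(hbnv 1).symm,(hinj.ne (by decide : (1:ZMod 5) ≠ 0)),(hinj.ne (by decide : (1:ZMod 5) ≠ 4))⟩,⟨hne_ab,(hanv 0),(hanv 4)⟩,⟨(hbnv 0),(hbnv 4)⟩,(hinj.ne (by decide : (0:ZMod 5) ≠ 4)), not_false⟩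
  · refine hfork ⟨(v 3), (v 2), u, (v 4), b, ?_,
      ((hvv 3 2).mpr (by decide)), (((htu 3).mpr (by decide)).symm), ((hvv 3 4).mpr (by decide)), (((htb 4).mpr (by decide)).symm),
      (fun hE => absurd ((htu 2).mp hE.symm) (by decide)), (fun hE => absurd ((hvv 2 4).mp hE) (by decide)), (fun hE => absurd ((htu 4).mp hE) (by decide)), (fun hE => absurd ((htb 3).mp hE.symm) (by decide)), (fun hE => absurd ((htb 2).mp hE.symm) (by decide)), hnadj_ub⟩
    simp only [List.nodup_cons, List.mem_cons, List.mem_singleton,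
      List.not_mem_nil, or_false, not_or, List.nodup_nil, and_true]
    exact ⟨⟨(hinj.ne (by decide : (3:ZMod 5) ≠ 2)),(hunv 3).symm,(hinj.ne (by decide : (3:ZMod 5) ≠ 4)),(hbnv 3).symm⟩,⟨(hunv 2).symm,(hinj.ne (by decide : (2:ZMod 5) ≠ 4)),(hbnv 2).symm⟩,⟨(hunv 4),hne_ub⟩,(hbnv 4).symm, not_false⟩
  · refine hfork ⟨(v 3), (v 4), u, (v 2), a, ?_,
      ((hvv 3 4).mpr (by decide)), (((htu 3).mpr (by decide)).symm), ((hvv 3 2).mpr (by decide)), (((hta 2).mpr (by decide)).symm),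
      (fun hE => absurd ((htu 4).mp hE.symm) (by decide)), (fun hE => absurd ((hvv 4 2).mp hE) (by decide)), (fun hE => absurd ((htu 2).mp hE) (by decide)), (fun hE => absurd ((hta 3).mp hE.symm) (by decide)), (fun hE => absurd ((hta 4).mp hE.symm) (by decide)), hnadj_ua⟩
    simp only [List.nodup_cons, List.mem_cons, List.mem_singleton,
      List.not_mem_nil, or_false, not_or, List.nodup_nil, and_true]
    exact ⟨⟨(hinj.ne (by decide : (3:ZMod 5) ≠ 4)),(hunv 3).symm,(hinj.ne (by decide : (3:ZMod 5) ≠ 2)),(hanv 3).symm⟩,⟨(hunv 4).symm,(hinj.ne (by decide : (4:ZMod 5) ≠ 2)),(hanv 4).symm⟩,⟨(hunv 2),hne_ua⟩,(hanv 2).symm, not_false⟩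
  · refine hfork ⟨(v 1), u, a, b, (v 4), ?_,
      (((htu 1).mpr (by decide)).symm), (((hta 1).mpr (by decide)).symm), (((htb 1).mpr (by decide)).symm), ((htb 4).mpr (by decide)),
      hnadj_ua, hnadj_ub, hnadj_ab, (fun hE => absurd ((hvv 1 4).mp hE) (by decide)), (fun hE => absurd ((htu 4).mp hE) (by decide)), (fun hE => absurd ((hta 4).mp hE) (by decide))⟩
    simp only [List.nodup_cons, List.mem_cons, List.mem_singleton,
      List.not_mem_nil, or_false, not_or, List.nodup_nil, and_true]
    exact ⟨⟨(hunv 1).symm,(hanv 1).symm,(hbnv 1).symm,(hinj.ne (by decide : (1:ZMod 5) ≠ 4))⟩,⟨hne_ua,hne_ub,(hunv 4)⟩,⟨hne_ab,(hanv 4)⟩,(hbnv 4), not_false⟩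
  · refine hfork ⟨(v 2), (v 3), a, b, (v 0), ?_,
      ((hvv 2 3).mpr (by decide)), (((hta 2).mpr (by decide)).symm), (((htb 2).mpr (by decide)).symm), ((htb 0).mpr (by decide)),
      (fun hE => absurd ((hta 3).mp hE.symm) (by decide)), (fun hE => absurd ((htb 3).mp hE.symm) (by decide)), hnadj_ab, (fun hE => absurd ((hvv 2 0).mp hE) (by decide)), (fun hE => absurd ((hvv 3 0).mp hE) (by decide)), (fun hE => absurd ((hta 0).mp hE) (by decide))⟩
    simp only [List.nodup_cons, List.mem_cons, List.mem_singleton,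
      List.not_mem_nil, or_false, not_or, List.nodup_nil, and_true]
    exact ⟨⟨(hinj.ne (by decide : (2:ZMod 5) ≠ 3)),(hanv 2).symm,(hbnv 2).symm,(hinj.ne (by decide : (2:ZMod 5) ≠ 0))⟩,⟨(hanv 3).symm,(hbnv 3).symm,(hinj.ne (by decide : (3:ZMod 5) ≠ 0))⟩,⟨hne_ab,(hanv 0)⟩,(hbnv 0), not_false⟩
  · refine hfork ⟨(v 0), u, b, (v 4), a, ?_,
      (((htu 0).mpr (by decide)).symm), (((htb 0).mpr (by decide)).symm), ((hvv 0 4).mpr (by decide)), (((hta 4).mpr (by decide)).symm),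
      hnadj_ub, (fun hE => absurd ((htu 4).mp hE) (by decide)), (fun hE => absurd ((htb 4).mp hE) (by decide)), (fun hE => absurd ((hta 0).mp hE.symm) (by decide)), hnadj_ua, (fun hE => hnadj_ab hE.symm)⟩
    simp only [List.nodup_cons, List.mem_cons, List.mem_singleton,
      List.not_mem_nil, or_false, not_or, List.nodup_nil, and_true]
    exact ⟨⟨(hunv 0).symm,(hbnv 0).symm,(hinj.ne (by decide : (0:ZMod 5) ≠ 4)),(hanv 0).symm⟩,⟨hne_ub,(hunv 4),hne_ua⟩,⟨(hbnv 4),(Ne.symm hne_ab)⟩,(hanv 4).symm, not_false⟩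
  · refine hfork ⟨(v 1), u, b, a, (v 4), ?_,
      (((htu 1).mpr (by decide)).symm), (((htb 1).mpr (by decide)).symm), (((hta 1).mpr (by decide)).symm), ((hta 4).mpr (by decide)),
      hnadj_ub, hnadj_ua, (fun hE => hnadj_ab hE.symm), (fun hE => absurd ((hvv 1 4).mp hE) (by decide)), (fun hE => absurd ((htu 4).mp hE) (by decide)), (fun hE => absurd ((htb 4).mp hE) (by decide))⟩
    simp only [List.nodup_cons, List.mem_cons, List.mem_singleton,
      List.not_mem_nil, or_false, not_or, List.nodup_nil, and_true]
    exact ⟨⟨(hunv 1).symm,(hbnv 1).symm,(hanv 1).symm,(hinj.ne (by decide : (1:ZMod 5) ≠ 4))⟩,⟨hne_ub,hne_ua,(hunv 4)⟩,⟨(Ne.symm hne_ab),(hbnv 4)⟩,(hanv 4), not_false⟩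
  · refine hfork ⟨(v 3), (v 2), u, (v 4), b, ?_,
      ((hvv 3 2).mpr (by decide)), (((htu 3).mpr (by decide)).symm), ((hvv 3 4).mpr (by decide)), (((htb 4).mpr (by decide)).symm),
      (fun hE => absurd ((htu 2).mp hE.symm) (by decide)), (fun hE => absurd ((hvv 2 4).mp hE) (by decide)), (fun hE => absurd ((htu 4).mp hE) (by decide)), (fun hE => absurd ((htb 3).mp hE.symm) (by decide)), (fun hE => absurd ((htb 2).mp hE.symm) (by decide)), hnadj_ub⟩
    simp only [List.nodup_cons, List.mem_cons, List.mem_singleton,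
      List.not_mem_nil, or_false, not_or, List.nodup_nil, and_true]
    exact ⟨⟨(hinj.ne (by decide : (3:ZMod 5) ≠ 2)),(hunv 3).symm,(hinj.ne (by decide : (3:ZMod 5) ≠ 4)),(hbnv 3).symm⟩,⟨(hunv 2).symm,(hinj.ne (by decide : (2:ZMod 5) ≠ 4)),(hbnv 2).symm⟩,⟨(hunv 4),hne_ub⟩,(hbnv 4).symm, not_false⟩
  · refine hfork ⟨(v 0), u, b, (v 4), a, ?_,
      (((htu 0).mpr (by decide)).symm), (((htb 0).mpr (by decide)).symm), ((hvv 0 4).mpr (by decide)), (((hta 4).mpr (by decide)).symm),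
      hnadj_ub, (fun hE => absurd ((htu 4).mp hE) (by decide)), (fun hE => absurd ((htb 4).mp hE) (by decide)), (fun hE => absurd ((hta 0).mp hE.symm) (by decide)), hnadj_ua, (fun hE => hnadj_ab hE.symm)⟩
    simp only [List.nodup_cons, List.mem_cons, List.mem_singleton,
      List.not_mem_nil, or_false, not_or, List.nodup_nil, and_true]
    exact ⟨⟨(hunv 0).symm,(hbnv 0).symm,(hinj.ne (by decide : (0:ZMod 5) ≠ 4)),(hanv 0).symm⟩,⟨hne_ub,(hunv 4),hne_ua⟩,⟨(hbnv 4),(Ne.symm hne_ab)⟩,(hanv 4).symm, not_false⟩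
  · refine hfork ⟨(v 1), a, b, u, (v 3), ?_,
      (((hta 1).mpr (by decide)).symm), (((htb 1).mpr (by decide)).symm), (((htu 1).mpr (by decide)).symm), ((htu 3).mpr (by decide)),
      hnadj_ab, (fun hE => hnadj_ua hE.symm), (fun hE => hnadj_ub hE.symm), (fun hE => absurd ((hvv 1 3).mp hE) (by decide)), (fun hE => absurd ((hta 3).mp hE) (by decide)), (fun hE => absurd ((htb 3).mp hE) (by decide))⟩
    simp only [List.nodup_cons, List.mem_cons, List.mem_singleton,
      List.not_mem_nil, or_false, not_or, List.nodup_nil, and_true]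
    exact ⟨⟨(hanv 1).symm,(hbnv 1).symm,(hunv 1).symm,(hinj.ne (by decide : (1:ZMod 5) ≠ 3))⟩,⟨hne_ab,(Ne.symm hne_ua),(hanv 3)⟩,⟨(Ne.symm hne_ub),(hbnv 3)⟩,(hunv 3), not_false⟩
  · refine hfork ⟨(v 2), (v 3), a, b, (v 0), ?_,
      ((hvv 2 3).mpr (by decide)), (((hta 2).mpr (by decide)).symm), (((htb 2).mpr (by decide)).symm), ((htb 0).mpr (by decide)),
      (fun hE => absurd ((hta 3).mp hE.symm) (by decide)), (fun hE => absurd ((htb 3).mp hE.symm) (by decide)), hnadj_ab, (fun hE => absurd ((hvv 2 0).mp hE) (by decide)), (fun hE => absurd ((hvv 3 0).mp hE) (by decide)), (fun hE => absurd ((hta 0).mp hE) (by decide))⟩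
    simp only [List.nodup_cons, List.mem_cons, List.mem_singleton,
      List.not_mem_nil, or_false, not_or, List.nodup_nil, and_true]
    exact ⟨⟨(hinj.ne (by decide : (2:ZMod 5) ≠ 3)),(hanv 2).symm,(hbnv 2).symm,(hinj.ne (by decide : (2:ZMod 5) ≠ 0))⟩,⟨(hanv 3).symm,(hbnv 3).symm,(hinj.ne (by decide : (3:ZMod 5) ≠ 0))⟩,⟨hne_ab,(hanv 0)⟩,(hbnv 0), not_false⟩
  · refine hfork ⟨(v 0), u, b, a, (v 2), ?_,
      (((htu 0).mpr (by decide)).symm), (((htb 0).mpr (by decide)).symm), (((hta 0).mpr (by decide)).symm), ((hta 2).mpr (by decide)),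
      hnadj_ub, hnadj_ua, (fun hE => hnadj_ab hE.symm), (fun hE => absurd ((hvv 0 2).mp hE) (by decide)), (fun hE => absurd ((htu 2).mp hE) (by decide)), (fun hE => absurd ((htb 2).mp hE) (by decide))⟩
    simp only [List.nodup_cons, List.mem_cons, List.mem_singleton,
      List.not_mem_nil, or_false, not_or, List.nodup_nil, and_true]
    exact ⟨⟨(hunv 0).symm,(hbnv 0).symm,(hanv 0).symm,(hinj.ne (by decide : (0:ZMod 5) ≠ 2))⟩,⟨hne_ub,hne_ua,(hunv 2)⟩,⟨(Ne.symm hne_ab),(hbnv 2)⟩,(hanv 2), not_false⟩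
  · refine hfork ⟨(v 2), (v 3), b, a, (v 0), ?_,
      ((hvv 2 3).mpr (by decide)), (((htb 2).mpr (by decide)).symm), (((hta 2).mpr (by decide)).symm), ((hta 0).mpr (by decide)),
      (fun hE => absurd ((htb 3).mp hE.symm) (by decide)), (fun hE => absurd ((hta 3).mp hE.symm) (by decide)), (fun hE => hnadj_ab hE.symm), (fun hE => absurd ((hvv 2 0).mp hE) (by decide)), (fun hE => absurd ((hvv 3 0).mp hE) (by decide)), (fun hE => absurd ((htb 0).mp hE) (by decide))⟩
    simp only [List.nodup_cons, List.mem_cons, List.mem_singleton,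
      List.not_mem_nil, or_false, not_or, List.nodup_nil, and_true]
    exact ⟨⟨(hinj.ne (by decide : (2:ZMod 5) ≠ 3)),(hbnv 2).symm,(hanv 2).symm,(hinj.ne (by decide : (2:ZMod 5) ≠ 0))⟩,⟨(hbnv 3).symm,(hanv 3).symm,(hinj.ne (by decide : (3:ZMod 5) ≠ 0))⟩,⟨(Ne.symm hne_ab),(hbnv 0)⟩,(hanv 0), not_false⟩
  · refine hfork ⟨(v 0), u, b, a, (v 2), ?_,
      (((htu 0).mpr (by decide)).symm), (((htb 0).mpr (by decide)).symm), (((hta 0).mpr (by decide)).symm), ((hta 2).mpr (by decide)),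
      hnadj_ub, hnadj_ua, (fun hE => hnadj_ab hE.symm), (fun hE => absurd ((hvv 0 2).mp hE) (by decide)), (fun hE => absurd ((htu 2).mp hE) (by decide)), (fun hE => absurd ((htb 2).mp hE) (by decide))⟩
    simp only [List.nodup_cons, List.mem_cons, List.mem_singleton,
      List.not_mem_nil, or_false, not_or, List.nodup_nil, and_true]
    exact ⟨⟨(hunv 0).symm,(hbnv 0).symm,(hanv 0).symm,(hinj.ne (by decide : (0:ZMod 5) ≠ 2))⟩,⟨hne_ub,hne_ua,(hunv 2)⟩,⟨(Ne.symm hne_ab),(hbnv 2)⟩,(hanv 2), not_false⟩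
  · refine hfork ⟨(v 0), u, b, a, (v 2), ?_,
      (((htu 0).mpr (by decide)).symm), (((htb 0).mpr (by decide)).symm), (((hta 0).mpr (by decide)).symm), ((hta 2).mpr (by decide)),
      hnadj_ub, hnadj_ua, (fun hE => hnadj_ab hE.symm), (fun hE => absurd ((hvv 0 2).mp hE) (by decide)), (fun hE => absurd ((htu 2).mp hE) (by decide)), (fun hE => absurd ((htb 2).mp hE) (by decide))⟩
    simp only [List.nodup_cons, List.mem_cons, List.mem_singleton,
      List.not_mem_nil, or_false, not_or, List.nodup_nil, and_true]
    exact ⟨⟨(hunv 0).symm,(hbnv 0).symm,(hanv 0).symm,(hinj.ne (by decide : (0:ZMod 5) ≠ 2))⟩,⟨hne_ub,hne_ua,(hunv 2)⟩,⟨(Ne.symm hne_ab),(hbnv 2)⟩,(hanv 2), not_false⟩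
  · refine hfork ⟨(v 2), (v 3), b, a, (v 0), ?_,
      ((hvv 2 3).mpr (by decide)), (((htb 2).mpr (by decide)).symm), (((hta 2).mpr (by decide)).symm), ((hta 0).mpr (by decide)),
      (fun hE => absurd ((htb 3).mp hE.symm) (by decide)), (fun hE => absurd ((hta 3).mp hE.symm) (by decide)), (fun hE => hnadj_ab hE.symm), (fun hE => absurd ((hvv 2 0).mp hE) (by decide)), (fun hE => absurd ((hvv 3 0).mp hE) (by decide)), (fun hE => absurd ((htb 0).mp hE) (by decide))⟩
    simp only [List.nodup_cons, List.mem_cons, List.mem_singleton,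
      List.not_mem_nil, or_false, not_or, List.nodup_nil, and_true]
    exact ⟨⟨(hinj.ne (by decide : (2:ZMod 5) ≠ 3)),(hbnv 2).symm,(hanv 2).symm,(hinj.ne (by decide : (2:ZMod 5) ≠ 0))⟩,⟨(hbnv 3).symm,(hanv 3).symm,(hinj.ne (by decide : (3:ZMod 5) ≠ 0))⟩,⟨(Ne.symm hne_ab),(hbnv 0)⟩,(hanv 0), not_false⟩
  · refine hfork ⟨(v 0), a, b, u, (v 3), ?_,
      (((hta 0).mpr (by decide)).symm), (((htb 0).mpr (by decide)).symm), (((htu 0).mpr (by decide)).symm), ((htu 3).mpr (by decide)),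
      hnadj_ab, (fun hE => hnadj_ua hE.symm), (fun hE => hnadj_ub hE.symm), (fun hE => absurd ((hvv 0 3).mp hE) (by decide)), (fun hE => absurd ((hta 3).mp hE) (by decide)), (fun hE => absurd ((htb 3).mp hE) (by decide))⟩
    simp only [List.nodup_cons, List.mem_cons, List.mem_singleton,
      List.not_mem_nil, or_false, not_or, List.nodup_nil, and_true]
    exact ⟨⟨(hanv 0).symm,(hbnv 0).symm,(hunv 0).symm,(hinj.ne (by decide : (0:ZMod 5) ≠ 3))⟩,⟨hne_ab,(Ne.symm hne_ua),(hanv 3)⟩,⟨(Ne.symm hne_ub),(hbnv 3)⟩,(hunv 3), not_false⟩
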